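/- Let L be an n×n real P_0 matrix (all principal minors nonnegative) and let λ be a nonzero complex eigenvalue of L. Then |arg(λ)| ≤ π − π/n. In particular every real eigenvalue of L is nonnegative. -/

import Mathlib

open Matrix BigOperators Finset Real

/-- The principal minor of `M` indexed by the subset `S`. -/
noncomputable def pminor {n : ℕ} (M : Matrix (Fin n) (Fin n) ℝ) (S : Finset (Fin n)) : ℝ :=
  (M.submatrix (fun i : {x // x ∈ S} => (i : Fin n)) (fun i : {x // x ∈ S} => (i : Fin n))).det

lemma det_piecewise_eq_minor {n : ℕ} {R : Type*} [CommRing R] (M : Matrix (Fin n) (Fin n) R)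
    (s : Finset (Fin n)) :
    (Matrix.of (s.piecewise (fun i => (1 : Matrix (Fin n) (Fin n) R) i) (fun i => M i))).det
      = (M.submatrix (fun i : {x // x ∈ sᶜ} => (i : Fin n))
          (fun i : {x // x ∈ sᶜ} => (i : Fin n))).det := by
  classical
  set A : Matrix (Fin n) (Fin n) R :=
    Matrix.of (s.piecewise (fun i => (1 : Matrix (Fin n) (Fin n) R) i) (fun i => M i)) with hA
  have hblock : A.submatrix (Equiv.sumCompl (· ∈ s)) (Equiv.sumCompl (· ∈ s)) =
      Matrix.fromBlocks 1 0
        (M.submatrix (fun i : {x // ¬ x ∈ s} => (i : Fin n)) (fun i : {x // x ∈ s} => (i : Fin n)))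
        (M.submatrix (fun i : {x // ¬ x ∈ s} => (i : Fin n))
          (fun i : {x // ¬ x ∈ s} => (i : Fin n))) := by
    ext i j
    rcases i with i | i <;> rcases j with j | j
    · simp [hA, Finset.piecewise, i.2, Matrix.one_apply]
    · have hne : (i : Fin n) ≠ (j : Fin n) := fun hc => j.2 (hc ▸ i.2)
      simp [hA, Finset.piecewise, i.2, Matrix.one_apply, hne]
    · simp [hA, Finset.piecewise, i.2]
    · simp [hA, Finset.piecewise, i.2]
  have h1 : A.det = (M.submatrix (fun i : {x // ¬ x ∈ s} => (i : Fin n))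
      (fun i : {x // ¬ x ∈ s} => (i : Fin n))).det := by
    rw [← Matrix.det_submatrix_equiv_self (Equiv.sumCompl (· ∈ s)) A, hblock,
      Matrix.det_fromBlocks_zero₁₂, Matrix.det_one, one_mul]
  rw [h1]
  let e' : {x // ¬ x ∈ s} ≃ {x // x ∈ sᶜ} :=
    Equiv.subtypeEquivRight (fun x => (Finset.mem_compl (s := s)).symm)
  rw [← Matrix.det_submatrix_equiv_self e'.symm]
  congr 1

lemma det_smul_one_add {n : ℕ} {R : Type*} [CommRing R] (z : R) (M : Matrix (Fin n) (Fin n) R) :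
    (z • (1 : Matrix (Fin n) (Fin n) R) + M).det
      = ∑ S : Finset (Fin n), z ^ Sᶜ.card *
        (M.submatrix (fun i : {x // x ∈ S} => (i : Fin n))
          (fun i : {x // x ∈ S} => (i : Fin n))).det := by
  classical
  have key : (z • (1 : Matrix (Fin n) (Fin n) R) + M).det
      = ∑ s : Finset (Fin n), z ^ s.card *
        (M.submatrix (fun i : {x // x ∈ sᶜ} => (i : Fin n))
          (fun i : {x // x ∈ sᶜ} => (i : Fin n))).det := by
    have hrows : (z • (1 : Matrix (Fin n) (Fin n) R) + M)
        = Matrix.of ((fun i => z • (1 : Matrix (Fin n) (Fin n) R) i) + fun i => M i) := by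
      ext i j; simp [Matrix.one_apply]
    have hstep := (Matrix.detRowAlternating (n := Fin n) (R := R)).toMultilinearMap.map_add_univ
      (fun i => z • (1 : Matrix (Fin n) (Fin n) R) i) (fun i => M i)
    have e1 : (z • (1 : Matrix (Fin n) (Fin n) R) + M).det
        = ∑ s : Finset (Fin n),
          (Matrix.detRowAlternating (n := Fin n) (R := R)).toMultilinearMap
            (s.piecewise (fun i => z • (1 : Matrix (Fin n) (Fin n) R) i) (fun i => M i)) := by
      rw [hrows]; exact hstep
    rw [e1]
    refine Finset.sum_congr rfl fun s _ => ?_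
    have hpw : s.piecewise (fun i => z • (1 : Matrix (Fin n) (Fin n) R) i) (fun i => M i)
        = s.piecewise (fun i => z •
            (s.piecewise (fun i => (1 : Matrix (Fin n) (Fin n) R) i) (fun i => M i)) i)
          (s.piecewise (fun i => (1 : Matrix (Fin n) (Fin n) R) i) (fun i => M i)) := by
      funext i
      by_cases h : i ∈ s <;> simp [Finset.piecewise, h]
    rw [hpw, MultilinearMap.map_piecewise_smul, Finset.prod_const, smul_eq_mul]
    congr 1
    exact det_piecewise_eq_minor M s
  rw [key]
  refine Fintype.sum_equiv
    (Equiv.mk (fun s : Finset (Fin n) => sᶜ) (fun s => sᶜ) compl_compl compl_compl) _ _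
    (fun s => ?_)
  simp

lemma no_small_arg_root {n : ℕ} (hn : 0 < n) (c : Finset (Fin n) → ℝ) (hc : ∀ S, 0 ≤ c S)
    (hc0 : c ∅ = 1) (z : ℂ) (hz : z ≠ 0) (harg : |z.arg| < π / n)
    (heq : ∑ S : Finset (Fin n), z ^ Sᶜ.card * (c S : ℂ) = 0) : False := by
  classical
  set θ := z.arg with hθ
  set r := ‖z‖ with hr
  have hr0 : 0 < r := norm_pos_iff.mpr hz
  set u : ℂ := Complex.exp (-(((n : ℝ) * θ / 2 : ℝ)) * Complex.I) with hu
  have hzpow : ∀ k : ℕ, u * z ^ k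
      = (↑(r ^ k) : ℂ) * Complex.exp ((((k : ℝ) * θ - (n : ℝ) * θ / 2 : ℝ) : ℂ) * Complex.I) := by
    intro k
    conv_lhs => rw [← Complex.norm_mul_exp_arg_mul_I z]
    rw [mul_pow, ← Complex.exp_nat_mul, hu, ← hθ, ← hr]
    push_cast
    rw [mul_comm (Complex.exp (-(↑n * (θ:ℂ) / 2) * Complex.I)), mul_assoc, ← Complex.exp_add]
    congr 1
    ring
  have hre : ∀ k : ℕ, k ≤ n → 0 < (u * z ^ k).re := by
    intro k hk
    rw [hzpow k, Complex.re_ofReal_mul, Complex.exp_ofReal_mul_I_re]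
    refine mul_pos (pow_pos hr0 k) (Real.cos_pos_of_mem_Ioo ⟨?_, ?_⟩)
    · have habs : |(k : ℝ) * θ - (n : ℝ) * θ / 2| < π / 2 := by
        have h1 : |(k : ℝ) - (n : ℝ) / 2| ≤ (n : ℝ) / 2 := by
          rw [abs_le]
          constructor
          · have : (0 : ℝ) ≤ (k : ℝ) := Nat.cast_nonneg k
            linarith
          · have : (k : ℝ) ≤ (n : ℝ) := Nat.cast_le.mpr hk
            linarith
        have h2 : |(k : ℝ) * θ - (n : ℝ) * θ / 2| = |(k : ℝ) - (n : ℝ) / 2| * |θ| := by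
          rw [← abs_mul]; ring_nf
        rw [h2]
        have hn' : (0 : ℝ) < n := Nat.cast_pos.mpr hn
        calc |(k : ℝ) - (n : ℝ) / 2| * |θ| ≤ ((n : ℝ) / 2) * |θ| :=
              mul_le_mul_of_nonneg_right h1 (abs_nonneg _)
          _ < ((n : ℝ) / 2) * (π / n) := by
              apply mul_lt_mul_of_pos_left harg (by positivity)
          _ = π / 2 := by field_simp
      have := abs_lt.mp habs
      linarith [this.1]
    · have habs : |(k : ℝ) * θ - (n : ℝ) * θ / 2| < π / 2 := by
        have h1 : |(k : ℝ) - (n : ℝ) / 2| ≤ (n : ℝ) / 2 := by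
          rw [abs_le]
          constructor
          · have : (0 : ℝ) ≤ (k : ℝ) := Nat.cast_nonneg k
            linarith
          · have : (k : ℝ) ≤ (n : ℝ) := Nat.cast_le.mpr hk
            linarith
        have h2 : |(k : ℝ) * θ - (n : ℝ) * θ / 2| = |(k : ℝ) - (n : ℝ) / 2| * |θ| := by
          rw [← abs_mul]; ring_nf
        rw [h2]
        have hn' : (0 : ℝ) < n := Nat.cast_pos.mpr hn
        calc |(k : ℝ) - (n : ℝ) / 2| * |θ| ≤ ((n : ℝ) / 2) * |θ| :=
              mul_le_mul_of_nonneg_right h1 (abs_nonneg _)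
          _ < ((n : ℝ) / 2) * (π / n) := by
              apply mul_lt_mul_of_pos_left harg (by positivity)
          _ = π / 2 := by field_simp
      exact (abs_lt.mp habs).2
  have hmul : (u * ∑ S : Finset (Fin n), z ^ Sᶜ.card * (c S : ℂ)) = 0 := by rw [heq, mul_zero]
  rw [Finset.mul_sum] at hmul
  have hre0 : (∑ S : Finset (Fin n), u * (z ^ Sᶜ.card * (c S : ℂ))).re = 0 := by
    rw [hmul]; rfl
  rw [Complex.re_sum] at hre0
  have hterm : ∀ S : Finset (Fin n), (u * (z ^ Sᶜ.card * (c S : ℂ))).re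
      = (u * z ^ Sᶜ.card).re * c S := by
    intro S
    rw [← mul_assoc]
    simp [Complex.mul_re]
  have hpos : 0 < ∑ S : Finset (Fin n), (u * (z ^ Sᶜ.card * (c S : ℂ))).re := by
    refine Finset.sum_pos' (fun S _ => ?_) ⟨∅, Finset.mem_univ _, ?_⟩
    · rw [hterm S]
      exact mul_nonneg (hre _ (by simpa using Finset.card_le_univ Sᶜ)).le (hc S)
    · rw [hterm ∅, hc0, mul_one]
      have : (∅ : Finset (Fin n))ᶜ.card = n := by simp
      rw [this]
      exact hre n le_rfl
  rw [hre0] at hpos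
  exact lt_irrefl 0 hpos

lemma abs_arg_neg_eq {z : ℂ} (hz : z ≠ 0) : |(-z).arg| = π - |z.arg| := by
  rcases lt_trichotomy z.im 0 with him | him | him
  · rw [Complex.arg_neg_eq_arg_add_pi_of_im_neg him]
    have h1 : z.arg < 0 := Complex.arg_neg_iff.mpr him
    have h2 : -π < z.arg := Complex.neg_pi_lt_arg z
    rw [abs_of_neg h1, abs_of_pos (by linarith)]
    ring
  · rcases lt_trichotomy z.re 0 with hre | hre | hre
    · have h1 : z.arg = π := Complex.arg_eq_pi_iff.mpr ⟨hre, him⟩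
      have h2 : (-z).arg = 0 := Complex.arg_eq_zero_iff.mpr ⟨by simpa using hre.le, by simp [him]⟩
      rw [h1, h2]
      simp [abs_of_pos Real.pi_pos]
    · exact absurd (Complex.ext hre him) hz
    · have h1 : z.arg = 0 := Complex.arg_eq_zero_iff.mpr ⟨hre.le, him⟩
      have h2 : (-z).arg = π := Complex.arg_eq_pi_iff.mpr ⟨by simpa using hre, by simp [him]⟩
      rw [h1, h2]
      simp [abs_of_pos Real.pi_pos]
  · rw [Complex.arg_neg_eq_arg_sub_pi_of_im_pos him]
    have h1 : 0 < z.arg := by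
      by_contra h
      push_neg at h
      rcases eq_or_lt_of_le h with h' | h'
      · have := Complex.arg_eq_zero_iff.mp h'
        exact absurd this.2 (ne_of_gt him)
      · have := Complex.arg_neg_iff.mp h'
        linarith
    have h2 : z.arg < π := by
      rcases eq_or_lt_of_le (Complex.arg_le_pi z) with h' | h'
      · have := Complex.arg_eq_pi_iff.mp h'
        exact absurd this.2 (ne_of_gt him)
      · exact h'
    rw [abs_of_pos h1, abs_of_neg (by linarith)]
    ring

theorem arg_eigenvalue_of_P0 {n : ℕ} (L : Matrix (Fin n) (Fin n) ℝ)
    (hP0 : ∀ S : Finset (Fin n), 0 ≤ pminor L S)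
    (lam : ℂ) (hlam : lam ≠ 0) (v : Fin n → ℂ) (hv : v ≠ 0)
    (heig : (L.map (fun x : ℝ => (x : ℂ))).mulVec v = lam • v) :
    |lam.arg| ≤ π - π / n ∧ (lam.im = 0 → 0 ≤ lam.re) := by
  classical
  have hn : 0 < n := by
    rcases Nat.eq_zero_or_pos n with h | h
    · subst h
      exact absurd (funext fun i => i.elim0) hv
    · exact h
  set M : Matrix (Fin n) (Fin n) ℂ := L.map (fun x : ℝ => (x : ℂ)) with hM
  have hdet : ((-lam) • (1 : Matrix (Fin n) (Fin n) ℂ) + M).det = 0 := by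
    rw [← Matrix.exists_mulVec_eq_zero_iff]
    refine ⟨v, hv, ?_⟩
    rw [Matrix.add_mulVec, Matrix.smul_mulVec, Matrix.one_mulVec, heig]
    simp
  rw [det_smul_one_add] at hdet
  have hminor : ∀ S : Finset (Fin n),
      (M.submatrix (fun i : {x // x ∈ S} => (i : Fin n))
        (fun i : {x // x ∈ S} => (i : Fin n))).det = ((pminor L S : ℝ) : ℂ) := by
    intro S
    rw [hM, Matrix.submatrix_map]
    rw [pminor]
    exact (RingHom.map_det Complex.ofRealHom _).symm
  simp only [hminor] at hdet
  have hpminor_empty : pminor L ∅ = 1 := by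
    haveI : IsEmpty {x // x ∈ (∅ : Finset (Fin n))} := ⟨fun x => (Finset.notMem_empty _ x.2)⟩
    exact Matrix.det_isEmpty
  have hmain : |lam.arg| ≤ π - π / n := by
    by_contra h
    push_neg at h
    have hargneg : |(-lam).arg| < π / n := by
      rw [abs_arg_neg_eq hlam]; linarith
    exact no_small_arg_root hn (pminor L) hP0 hpminor_empty (-lam)
      (neg_ne_zero.mpr hlam) hargneg hdet
  refine ⟨hmain, fun him => ?_⟩
  by_contra hre
  push_neg at hre
  have h1 : lam.arg = π := Complex.arg_eq_pi_iff.mpr ⟨hre, him⟩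
  have h2 : 0 < π / n := div_pos Real.pi_pos (Nat.cast_pos.mpr hn)
  rw [h1, abs_of_pos Real.pi_pos] at hmain
  linarith
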